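/- Let {g_i} be an (X₁,Θ,X₂)-frame and suppose the range of the analysis operator Ũ : X₂ → Θ, Ũf = {g_i(f)}, is closed in Θ. Then {g_i} satisfies the lower Θ-frame inequality for X₂, i.e., there is a constant A' > 0 with A'‖f‖₂ ≤ ‖{g_i(f)}‖_Θ for all f ∈ X₂, and hence {g_i} is a Θ-frame for X₂. -/

import Mathlib

open Filter Finset

/-- The `i`-th canonical sequence vector. -/
def e (i : ℕ) : ℕ → ℝ := fun j => if j = i then 1 else 0

/-- Truncation of a sequence to its first `n` coordinates. -/
def trunc (n : ℕ) (c : ℕ → ℝ) : ℕ → ℝ := fun j => if j < n then c j else 0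

/-- `N` is a norm on the real vector space `V`. -/
def IsNormOn {V : Type*} [AddCommGroup V] [Module ℝ V] (N : V → ℝ) : Prop :=
  (∀ x, 0 ≤ N x) ∧ (∀ x y, N (x + y) ≤ N x + N y) ∧
  (∀ (a : ℝ) (x : V), N (a • x) = |a| * N x) ∧ ∀ x, N x = 0 → x = 0

lemma IsNormOn.zero {V : Type*} [AddCommGroup V] [Module ℝ V] {N : V → ℝ}
    (hN : IsNormOn N) : N 0 = 0 := by
  have := hN.2.2.1 0 0
  simpa using this

lemma IsNormOn.neg {V : Type*} [AddCommGroup V] [Module ℝ V] {N : V → ℝ}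
    (hN : IsNormOn N) (x : V) : N (-x) = N x := by
  have := hN.2.2.1 (-1) x
  simpa using this

/-- Package an `IsNormOn` predicate as an `AddGroupNorm`. -/
def IsNormOn.toAddGroupNorm {V : Type*} [AddCommGroup V] [Module ℝ V] {N : V → ℝ}
    (hN : IsNormOn N) : AddGroupNorm V where
  toFun := N
  map_zero' := hN.zero
  add_le' := hN.2.1
  neg' := hN.neg
  eq_zero_of_map_eq_zero' := hN.2.2.2

set_option maxHeartbeats 2000000 in
/-- If `{g_i}` is an `(X₁,Θ,X₂)`-frame whose analysis operator has closed
range in `Θ`, then the lower `Θ`-frame inequality holds with the norm `‖·‖₂`, so `{g_i}`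
is a `Θ`-frame for `X₂`. -/
theorem statement5
    {X : Type*} [AddCommGroup X] [Module ℝ X]
    (n1 n2 : X → ℝ) (hn1 : IsNormOn n1) (hn2 : IsNormOn n2)
    (hle : ∀ f, n1 f ≤ n2 f)
    -- `X₂` is a Banach space w.r.t. `n2`
    (hX2complete : ∀ u : ℕ → X,
      (∀ ε > 0, ∃ N, ∀ m ≥ N, ∀ n ≥ N, n2 (u m - u n) < ε) →
      ∃ x, Tendsto (fun n => n2 (u n - x)) atTop (nhds 0))
    -- `Θ` is a BK-space
    (memT : (ℕ → ℝ) → Prop) (nT : (ℕ → ℝ) → ℝ)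
    (hT0 : memT 0) (hTadd : ∀ c d, memT c → memT d → memT (c + d))
    (hTsmul : ∀ (a : ℝ) c, memT c → memT (a • c))
    (hnT : IsNormOn nT)
    (hTcomplete : ∀ u : ℕ → (ℕ → ℝ), (∀ n, memT (u n)) →
      (∀ ε > 0, ∃ N, ∀ m ≥ N, ∀ n ≥ N, nT (u m - u n) < ε) →
      ∃ c, memT c ∧ Tendsto (fun n => nT (u n - c)) atTop (nhds 0))
    (hBK : ∀ i, ∃ K, ∀ c, memT c → |c i| ≤ K * nT c)
    -- `{g_i}` is an `(X₁,Θ,X₂)`-frame with bounds `A ≤ B`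
    (g : ℕ → X →ₗ[ℝ] ℝ) (A Bb : ℝ) (hA : 0 < A) (hAB : A ≤ Bb)
    (hframe : ∀ f : X, memT (fun i => g i f) ∧
      A * n1 f ≤ nT (fun i => g i f) ∧ nT (fun i => g i f) ≤ Bb * n2 f)
    -- the range of `Ũ` is closed in `Θ`
    (hclosed : ∀ c : ℕ → ℝ, memT c →
      (∀ ε > 0, ∃ f : X, nT ((fun i => g i f) - c) < ε) →
      ∃ f : X, (fun i => g i f) = c) :
    -- conclusion: the lower `Θ`-frame inequality for `X₂`, hence a `Θ`-frame for `X₂`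
    ∃ A' > 0, ∀ f : X, A' * n2 f ≤ nT (fun i => g i f) := by
  classical
  -- install the norm `n2` on `X`
  letI : NormedAddCommGroup X := hn2.toAddGroupNorm.toNormedAddCommGroup
  have hXnorm : ∀ f : X, ‖f‖ = n2 f := fun f => rfl
  letI : NormedSpace ℝ X :=
    { norm_smul_le := fun a x => le_of_eq (by
        show n2 (a • x) = |a| * n2 x
        exact hn2.2.2.1 a x) }
  haveI : CompleteSpace X := by
    apply Metric.complete_of_cauchySeq_tendsto
    intro u hu
    rw [Metric.cauchySeq_iff] at hu
    obtain ⟨x, hx⟩ := hX2complete u (by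
      intro ε hε
      obtain ⟨N, hN⟩ := hu ε hε
      exact ⟨N, fun m hm n hn => by
        have := hN m hm n hn
        rwa [dist_eq_norm] at this⟩)
    refine ⟨x, tendsto_iff_dist_tendsto_zero.2 ?_⟩
    simpa [dist_eq_norm, hXnorm] using hx
  -- the analysis operator into sequences
  set G : X →ₗ[ℝ] (ℕ → ℝ) := LinearMap.pi g with hG
  have hGapp : ∀ f : X, G f = fun i => g i f := fun f => rfl
  -- the range of `G` as a subspace, normed by `nT`
  set R : Submodule ℝ (ℕ → ℝ) := LinearMap.range G with hR
  have hmemT : ∀ y : R, memT (y : ℕ → ℝ) := by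
    rintro ⟨y, f, rfl⟩
    exact (hframe f).1
  letI : NormedAddCommGroup R :=
    AddGroupNorm.toNormedAddCommGroup
      { toFun := fun y => nT (y : ℕ → ℝ)
        map_zero' := by simpa using hnT.zero
        add_le' := fun y z => hnT.2.1 _ _
        neg' := fun y => hnT.neg _
        eq_zero_of_map_eq_zero' := fun y hy => by
          apply Subtype.ext
          exact hnT.2.2.2 _ hy }
  have hRnorm : ∀ y : R, ‖y‖ = nT (y : ℕ → ℝ) := fun y => rfl
  letI : UniformSpace R := PseudoMetricSpace.toUniformSpace
  letI : TopologicalSpace R := UniformSpace.toTopologicalSpace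
  letI : NormedSpace ℝ R :=
    { norm_smul_le := fun a y => le_of_eq (by
        show nT ((a • y : R) : ℕ → ℝ) = |a| * nT (y : ℕ → ℝ)
        rw [Submodule.coe_smul]
        exact hnT.2.2.1 a _) }
  haveI : CompleteSpace R := by
    apply Metric.complete_of_cauchySeq_tendsto
    intro u hu
    rw [Metric.cauchySeq_iff] at hu
    obtain ⟨c, hcmem, hc⟩ := hTcomplete (fun n => (u n : ℕ → ℝ)) (fun n => hmemT _) (by
      intro ε hε
      obtain ⟨N, hN⟩ := hu ε hε
      refine ⟨N, fun m hm n hn => ?_⟩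
      have := hN m hm n hn
      rwa [dist_eq_norm, hRnorm, AddSubgroupClass.coe_sub] at this)
    -- the limit is in the range by closedness
    have hcr : c ∈ R := by
      obtain ⟨f, hf⟩ := hclosed c hcmem (by
        intro ε hε
        have := (Metric.tendsto_atTop.1 hc) ε hε
        obtain ⟨N, hN⟩ := this
        have h1 := hN N le_rfl
        rw [Real.dist_eq, sub_zero, abs_of_nonneg (hnT.1 _)] at h1
        obtain ⟨f, hf⟩ := (u N).2
        refine ⟨f, ?_⟩
        have : (fun i => g i f) = (u N : ℕ → ℝ) := hf
        rwa [this])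
      exact ⟨f, hf⟩
    refine ⟨⟨c, hcr⟩, tendsto_iff_dist_tendsto_zero.2 ?_⟩
    have : ∀ n, dist (u n) (⟨c, hcr⟩ : R) = nT ((u n : ℕ → ℝ) - c) := by
      intro n
      rw [dist_eq_norm, hRnorm, AddSubgroupClass.coe_sub]
    simpa [this] using hc
  -- the analysis operator as a continuous linear map onto its range
  have hBb : (0 : ℝ) < Bb := lt_of_lt_of_le hA hAB
  set U : X →L[ℝ] R := LinearMap.mkContinuous (G.rangeRestrict) Bb (by
    intro f
    have : ‖G.rangeRestrict f‖ = nT (fun i => g i f) := rfl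
    rw [this, hXnorm]
    exact (hframe f).2.2) with hU
  have hUapp : ∀ f : X, ((U f : R) : ℕ → ℝ) = fun i => g i f := fun f => rfl
  -- `U` is bijective
  have hinj : LinearMap.ker (U : X →ₗ[ℝ] R) = ⊥ := by
    rw [LinearMap.ker_eq_bot']
    intro f hf
    have h0 : (fun i => g i f) = (0 : ℕ → ℝ) := congrArg Subtype.val hf
    have hlow := (hframe f).2.1
    rw [h0, hnT.zero] at hlow
    have hn1le : n1 f ≤ 0 := by nlinarith [hn1.1 f]
    have : n1 f = 0 := le_antisymm hn1le (hn1.1 _)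
    exact hn1.2.2.2 _ this
  have hsurj : LinearMap.range (U : X →ₗ[ℝ] R) = ⊤ := by
    rw [LinearMap.range_eq_top]
    rintro ⟨y, f, rfl⟩
    exact ⟨f, rfl⟩
  -- apply the inverse mapping theorem
  set E := ContinuousLinearEquiv.ofBijective U hinj hsurj with hE
  set C : ℝ := ‖(E.symm : R →L[ℝ] X)‖ with hC
  refine ⟨(C + 1)⁻¹, by positivity, fun f => ?_⟩
  have key : n2 f ≤ C * nT (fun i => g i f) := by
    have h1 : ‖(E.symm : R →L[ℝ] X) (E f)‖ ≤ C * ‖E f‖ :=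
      (E.symm : R →L[ℝ] X).le_opNorm (E f)
    have h2 : (E.symm : R →L[ℝ] X) (E f) = f := E.symm_apply_apply f
    have h3 : E f = U f := rfl
    rw [h2, hXnorm] at h1
    have h4 : ‖E f‖ = nT (fun i => g i f) := by rw [h3, hRnorm, hUapp]
    rwa [h4] at h1
  have hC0 : 0 ≤ C := norm_nonneg _
  have hnT0 : 0 ≤ nT (fun i => g i f) := hnT.1 _
  rw [inv_mul_le_iff₀ (by positivity)]
  nlinarith
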